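/- (Theorem 4(i), sufficient decrease for nonconvex separable h) Let h(x) = Σ_{j=1}^{n} h_j(x_j) with arbitrary functions h_j : ℝ → ℝ, and let f(x) = (1/2)⟨x, Ax⟩ + ⟨b, x⟩ + h(x). Let ω ∈ (0,2), θ ≥ 0, and δ = min_j ( θ/ω + ((1−ω)/ω)·D_{jj} ). Fix x ∈ ℝⁿ, set u = b + Cx, and suppose z ∈ ℝⁿ is such that for every coordinate j ∈ {1,…,n}, z_j globally minimizes the one-dimensional subproblem: for all t ∈ ℝ, (1/2)B_{jj} z_j² + w_j z_j + h_j(z_j) ≤ (1/2)B_{jj} t² + w_j t + h_j(t), where w_j = u_j + Σ_{i<j} B_{ji} z_i. Then f(z) − f(x) ≤ −(δ/2)·‖z − x‖². In particular, if δ > 0, then f(z) ≤ f(x) with strict decrease whenever z ≠ x. -/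

import Mathlib

open scoped RealInnerProductSpace
open Matrix Filter

noncomputable section

/-- Euclidean space ℝⁿ. -/
abbrev E (n : ℕ) := EuclideanSpace ℝ (Fin n)

/-- Matrix-vector multiplication, valued in Euclidean space. -/
def mulVecE {n : ℕ} (M : Matrix (Fin n) (Fin n) ℝ) (x : E n) : E n :=
  (WithLp.equiv 2 (Fin n → ℝ)).symm (M.mulVec ((WithLp.equiv 2 (Fin n → ℝ)) x))

/-- Operator (spectral) norm of a matrix. -/
def opNorm {n : ℕ} (M : Matrix (Fin n) (Fin n) ℝ) : ℝ :=
  ‖Matrix.toEuclideanCLM (𝕜 := ℝ) M‖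

/-- The diagonal part `D` of `A`. -/
def Dmat {n : ℕ} (A : Matrix (Fin n) (Fin n) ℝ) : Matrix (Fin n) (Fin n) ℝ :=
  Matrix.diagonal fun i => A i i

/-- The strictly lower triangular part `L` of `A`. -/
def Lmat {n : ℕ} (A : Matrix (Fin n) (Fin n) ℝ) : Matrix (Fin n) (Fin n) ℝ :=
  Matrix.of fun i j => if (j : ℕ) < (i : ℕ) then A i j else 0

/-- `B = L + (1/ω)(D + θI)`. -/
def Bmat {n : ℕ} (ω θ : ℝ) (A : Matrix (Fin n) (Fin n) ℝ) : Matrix (Fin n) (Fin n) ℝ :=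
  Lmat A + ω⁻¹ • (Dmat A + θ • (1 : Matrix (Fin n) (Fin n) ℝ))

/-- `C = Lᵀ + (1/ω)((ω−1)D − θI)`. -/
def Cmat {n : ℕ} (ω θ : ℝ) (A : Matrix (Fin n) (Fin n) ℝ) : Matrix (Fin n) (Fin n) ℝ :=
  (Lmat A)ᵀ + ω⁻¹ • ((ω - 1) • Dmat A - θ • (1 : Matrix (Fin n) (Fin n) ℝ))

/-- `v` is a subgradient of `h` at `z`. -/
def IsSubgradient {n : ℕ} (h : E n → ℝ) (v z : E n) : Prop :=
  ∀ y, h z + ⟪v, y - z⟫ ≤ h y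

/-- The composite objective `f(x) = (1/2)⟨x, Ax⟩ + ⟨b, x⟩ + h(x)`. -/
def fObj {n : ℕ} (A : Matrix (Fin n) (Fin n) ℝ) (b : E n) (h : E n → ℝ) (x : E n) : ℝ :=
  (1/2) * ⟪x, mulVecE A x⟫ + ⟪b, x⟫ + h x

/-- `z` is a triangle-proximal point of `x`: there is a subgradient `v` of `h` at `z`
with `Bz + b + Cx + v = 0`. -/
def IsTriangleProx {n : ℕ} (ω θ : ℝ) (A : Matrix (Fin n) (Fin n) ℝ) (b : E n)
    (h : E n → ℝ) (x z : E n) : Prop :=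
  ∃ v, IsSubgradient h v z ∧
    mulVecE (Bmat ω θ A) z + b + mulVecE (Cmat ω θ A) x + v = 0
section AuxLemmas
variable {n : ℕ}

lemma mulVecE_apply (M : Matrix (Fin n) (Fin n) ℝ) (x : E n) (j : Fin n) :
    mulVecE M x j = ∑ i, M j i * x i := by
  simp [mulVecE, Matrix.mulVec, dotProduct]

lemma inner_sum' (a b : E n) : ⟪a, b⟫ = ∑ i, a i * b i := by
  simp [PiLp.inner_apply, mul_comm]

lemma norm_sq_sum' (a : E n) : ‖a‖ ^ 2 = ∑ i, (a i)^2 := by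
  rw [← real_inner_self_eq_norm_sq]
  rw [PiLp.inner_apply]
  simp [sq]

lemma sum_Iio_eq_ite (j : Fin n) (F : Fin n → ℝ) :
    ∑ i ∈ Finset.Iio j, F i = ∑ i : Fin n, (if (i:ℕ) < (j:ℕ) then F i else 0) := by
  have h : Finset.Iio j = Finset.univ.filter (fun i : Fin n => (i:ℕ) < (j:ℕ)) := by
    ext i
    simp only [Finset.mem_Iio, Finset.mem_filter, Finset.mem_univ, true_and, Fin.lt_def]
  rw [h, Finset.sum_filter]

lemma swap_tri (g : Fin n → Fin n → ℝ) :
    ∑ j : Fin n, ∑ i : Fin n, (if (j:ℕ) < (i:ℕ) then g j i else 0)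
      = ∑ j : Fin n, ∑ i : Fin n, (if (i:ℕ) < (j:ℕ) then g i j else 0) :=
  Finset.sum_comm

lemma Bmat_apply (ω θ : ℝ) (A : Matrix (Fin n) (Fin n) ℝ) (j i : Fin n) :
    Bmat ω θ A j i = (if (i:ℕ) < (j:ℕ) then A j i else 0)
      + (if j = i then ω⁻¹ * (A j j + θ) else 0) := by
  by_cases h : j = i
  · subst h
    simp [Bmat, Lmat, Dmat, Matrix.add_apply, Matrix.smul_apply, Matrix.one_apply]
    ring
  · simp [Bmat, Lmat, Dmat, Matrix.add_apply, Matrix.smul_apply, Matrix.one_apply,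
      Matrix.diagonal_apply_ne _ h, h]

lemma Cmat_apply (ω θ : ℝ) (A : Matrix (Fin n) (Fin n) ℝ) (j i : Fin n) :
    Cmat ω θ A j i = (if (j:ℕ) < (i:ℕ) then A i j else 0)
      + (if j = i then ω⁻¹ * ((ω - 1) * A j j - θ) else 0) := by
  by_cases h : j = i
  · subst h
    simp [Cmat, Lmat, Dmat, Matrix.add_apply, Matrix.smul_apply, Matrix.one_apply]
  · simp [Cmat, Lmat, Dmat, Matrix.add_apply, Matrix.smul_apply, Matrix.one_apply,
      Matrix.diagonal_apply_ne _ h, h]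

end AuxLemmas

/-- Theorem 4(i), sufficient decrease for nonconvex separable h. -/
theorem nonconvex_sufficient_decrease {n : ℕ} (hn : 0 < n)
    (A : Matrix (Fin n) (Fin n) ℝ) (hA : A.IsSymm) (b : E n)
    (hj : Fin n → ℝ → ℝ)
    (ω θ : ℝ) (hω : ω ∈ Set.Ioo (0 : ℝ) 2) (hθ : 0 ≤ θ)
    (δ : ℝ) (hδ : δ = ⨅ j, (θ / ω + (1 - ω) / ω * A j j))
    (f : E n → ℝ)
    (hf : ∀ y : E n, f y = (1 / 2) * ⟪y, mulVecE A y⟫ + ⟪b, y⟫ + ∑ j, hj j (y j))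
    (x z : E n) (u : E n) (hu : u = b + mulVecE (Cmat ω θ A) x)
    (hzopt : ∀ j : Fin n, ∀ t : ℝ,
      (1 / 2) * Bmat ω θ A j j * (z j) ^ 2
          + (u j + ∑ i ∈ Finset.Iio j, Bmat ω θ A j i * z i) * z j + hj j (z j)
        ≤ (1 / 2) * Bmat ω θ A j j * t ^ 2
          + (u j + ∑ i ∈ Finset.Iio j, Bmat ω θ A j i * z i) * t + hj j t) :
    f z - f x ≤ -(δ / 2) * ‖z - x‖ ^ 2
      ∧ (0 < δ → f z ≤ f x ∧ (z ≠ x → f z < f x)) := by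
  obtain ⟨hω0, hω2⟩ := hω
  have hωne : ω ≠ 0 := ne_of_gt hω0
  have hNE : Nonempty (Fin n) := Fin.pos_iff_nonempty.mp hn
  have hsym : ∀ i j : Fin n, A i j = A j i := fun i j => by rw [← hA.apply]
  have hδle : ∀ j : Fin n, δ ≤ θ / ω + (1 - ω) / ω * A j j := by
    intro j
    rw [hδ]
    exact ciInf_le (Set.Finite.bddBelow (Set.finite_range _)) j
  have hnorm : ‖z - x‖ ^ 2 = ∑ j : Fin n, (z j - x j)^2 := by
    rw [norm_sq_sum']
    exact Finset.sum_congr rfl fun j _ => by simp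
  -- per-coordinate auxiliary rewrites
  have huj : ∀ j : Fin n, u j
      = b j + ((∑ i : Fin n, if (j:ℕ) < (i:ℕ) then A j i * x i else 0)
          + (ω⁻¹ * ((ω - 1) * A j j - θ)) * x j) := by
    intro j
    rw [hu]
    have : (b + mulVecE (Cmat ω θ A) x) j = b j + mulVecE (Cmat ω θ A) x j := by simp
    rw [this, mulVecE_apply]
    congr 1
    have : ∀ i : Fin n, Cmat ω θ A j i * x i
        = (if (j:ℕ) < (i:ℕ) then A j i * x i else 0)
          + (if i = j then (ω⁻¹ * ((ω - 1) * A j j - θ)) * x i else 0) := by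
      intro i
      rw [Cmat_apply]
      by_cases h : j = i
      · subst h
        simp
      · have h' : i ≠ j := fun e => h e.symm
        simp only [if_neg h, if_neg h', add_zero]
        by_cases hlt : (j:ℕ) < (i:ℕ)
        · rw [if_pos hlt, if_pos hlt, hsym i j]
        · rw [if_neg hlt, if_neg hlt, zero_mul]
    rw [Finset.sum_congr rfl fun i _ => this i, Finset.sum_add_distrib]
    simp
  have hBdiag : ∀ j : Fin n, Bmat ω θ A j j = ω⁻¹ * (A j j + θ) := by
    intro j
    rw [Bmat_apply]
    simp
  have hBIio : ∀ j : Fin n, (∑ i ∈ Finset.Iio j, Bmat ω θ A j i * z i)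
      = ∑ i : Fin n, (if (i:ℕ) < (j:ℕ) then A j i * z i else 0) := by
    intro j
    rw [sum_Iio_eq_ite]
    refine Finset.sum_congr rfl fun i _ => ?_
    by_cases h : (i:ℕ) < (j:ℕ)
    · rw [if_pos h, if_pos h, Bmat_apply, if_pos h,
        if_neg (fun e : j = i => by rw [e] at h; omega), add_zero]
    · rw [if_neg h, if_neg h]
  have key : f z - f x ≤ -(1/2) * ∑ j : Fin n, (θ / ω + (1 - ω) / ω * A j j) * (z j - x j)^2 := by
    have hΔ : ∑ j : Fin n,
        (((1/2 : ℝ) * Bmat ω θ A j j * (z j)^2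
            + (u j + ∑ i ∈ Finset.Iio j, Bmat ω θ A j i * z i) * z j + hj j (z j))
         - ((1/2) * Bmat ω θ A j j * (x j)^2
            + (u j + ∑ i ∈ Finset.Iio j, Bmat ω θ A j i * z i) * (x j) + hj j (x j))) ≤ 0 :=
      Finset.sum_nonpos fun j _ => sub_nonpos.mpr (hzopt j (x j))
    have hid : f z - f x = (∑ j : Fin n,
        (((1/2 : ℝ) * Bmat ω θ A j j * (z j)^2
            + (u j + ∑ i ∈ Finset.Iio j, Bmat ω θ A j i * z i) * z j + hj j (z j))
         - ((1/2) * Bmat ω θ A j j * (x j)^2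
            + (u j + ∑ i ∈ Finset.Iio j, Bmat ω θ A j i * z i) * (x j) + hj j (x j))))
        - (1/2) * ∑ j : Fin n, (θ / ω + (1 - ω) / ω * A j j) * (z j - x j)^2 := by
      rw [hf z, hf x, inner_sum' z (mulVecE A z), inner_sum' x (mulVecE A x),
        inner_sum' b z, inner_sum' b x]
      simp only [mulVecE_apply, huj, hBdiag, hBIio]
      -- generic sum splitters
      have sadd2 : ∀ (F G : Fin n → Fin n → ℝ),
          (∑ j : Fin n, ∑ i : Fin n, (F j i + G j i))
            = (∑ j : Fin n, ∑ i : Fin n, F j i) + ∑ j : Fin n, ∑ i : Fin n, G j i := by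
        intro F G
        rw [← Finset.sum_add_distrib]
        exact Finset.sum_congr rfl fun j _ => Finset.sum_add_distrib
      have ssub2 : ∀ (F G : Fin n → Fin n → ℝ),
          (∑ j : Fin n, ∑ i : Fin n, (F j i - G j i))
            = (∑ j : Fin n, ∑ i : Fin n, F j i) - ∑ j : Fin n, ∑ i : Fin n, G j i := by
        intro F G
        rw [← Finset.sum_sub_distrib]
        exact Finset.sum_congr rfl fun j _ => Finset.sum_sub_distrib _ _
      -- quadratic form decomposition
      have hquad : ∀ a : E n, (∑ j : Fin n, a j * ∑ i : Fin n, A j i * a i)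
          = 2 * (∑ j : Fin n, ∑ i : Fin n, if (i:ℕ) < (j:ℕ) then A j i * (a i * a j) else 0)
            + ∑ j : Fin n, A j j * (a j * a j) := by
        intro a
        have h1 : (∑ j : Fin n, a j * ∑ i : Fin n, A j i * a i)
            = ∑ j : Fin n, ∑ i : Fin n,
                ((if (i:ℕ) < (j:ℕ) then A j i * (a i * a j) else 0)
                 + ((if (j:ℕ) < (i:ℕ) then A j i * (a i * a j) else 0)
                   + (if i = j then A j i * (a i * a j) else 0))) := by
          refine Finset.sum_congr rfl fun j _ => ?_
          rw [Finset.mul_sum]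
          refine Finset.sum_congr rfl fun i _ => ?_
          rcases lt_trichotomy (i:ℕ) (j:ℕ) with h|h|h
          · rw [if_pos h, if_neg (by omega), if_neg (fun e => by rw [e] at h; exact lt_irrefl _ h)]
            ring
          · have e : i = j := Fin.ext h
            subst e
            rw [if_neg (lt_irrefl (i:ℕ)), if_pos rfl]
            ring
          · rw [if_neg (by omega), if_pos h, if_neg (fun e => by rw [e] at h; exact lt_irrefl _ h)]
            ring
        rw [h1, sadd2, sadd2]
        have hup : (∑ j : Fin n, ∑ i : Fin n, if (j:ℕ) < (i:ℕ) then A j i * (a i * a j) else 0)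
            = ∑ j : Fin n, ∑ i : Fin n, if (i:ℕ) < (j:ℕ) then A j i * (a i * a j) else 0 := by
          rw [swap_tri fun j i => A j i * (a i * a j)]
          refine Finset.sum_congr rfl fun j _ => Finset.sum_congr rfl fun i _ => ?_
          split_ifs with h
          · rw [hsym i j]; ring
          · rfl
        have hdg : (∑ j : Fin n, ∑ i : Fin n, if i = j then A j i * (a i * a j) else 0)
            = ∑ j : Fin n, A j j * (a j * a j) := by
          refine Finset.sum_congr rfl fun j _ => ?_
          simp
        rw [hup, hdg]
        ring
      -- splitting of the big optimality sum
      have hsplit : (∑ j : Fin n,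
          ((1/2 : ℝ) * (ω⁻¹ * (A j j + θ)) * z j ^ 2 +
              (b j + ((∑ i : Fin n, if (j:ℕ) < (i:ℕ) then A j i * x i else 0) +
                  ω⁻¹ * ((ω - 1) * A j j - θ) * x j) +
                ∑ i : Fin n, if (i:ℕ) < (j:ℕ) then A j i * z i else 0) * z j +
            hj j (z j) -
            ((1/2) * (ω⁻¹ * (A j j + θ)) * x j ^ 2 +
              (b j + ((∑ i : Fin n, if (j:ℕ) < (i:ℕ) then A j i * x i else 0) +
                  ω⁻¹ * ((ω - 1) * A j j - θ) * x j) +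
                ∑ i : Fin n, if (i:ℕ) < (j:ℕ) then A j i * z i else 0) * x j +
            hj j (x j))))
          = ((∑ j : Fin n, hj j (z j)) - ∑ j : Fin n, hj j (x j))
            + ((∑ j : Fin n, b j * z j) - ∑ j : Fin n, b j * x j)
            + (∑ j : Fin n, (∑ i : Fin n, if (j:ℕ) < (i:ℕ) then A j i * x i else 0) * (z j - x j))
            + (∑ j : Fin n, (∑ i : Fin n, if (i:ℕ) < (j:ℕ) then A j i * z i else 0) * (z j - x j))
            + (∑ j : Fin n, ((1/2) * (ω⁻¹ * (A j j + θ)) * (z j ^ 2 - x j ^ 2)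
                + ω⁻¹ * ((ω - 1) * A j j - θ) * x j * (z j - x j))) := by
        rw [← Finset.sum_sub_distrib, ← Finset.sum_sub_distrib, ← Finset.sum_add_distrib,
          ← Finset.sum_add_distrib, ← Finset.sum_add_distrib, ← Finset.sum_add_distrib]
        refine Finset.sum_congr rfl fun j _ => ?_
        ring
      -- the two lower-triangular cross sums
      have hU : (∑ j : Fin n, (∑ i : Fin n, if (j:ℕ) < (i:ℕ) then A j i * x i else 0) * (z j - x j))
          = (∑ j : Fin n, ∑ i : Fin n, if (i:ℕ) < (j:ℕ) then A j i * (z i * x j) else 0)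
            - (∑ j : Fin n, ∑ i : Fin n, if (i:ℕ) < (j:ℕ) then A j i * (x i * x j) else 0) := by
        have h1 : (∑ j : Fin n, (∑ i : Fin n, if (j:ℕ) < (i:ℕ) then A j i * x i else 0) * (z j - x j))
            = ∑ j : Fin n, ∑ i : Fin n, (if (j:ℕ) < (i:ℕ) then A j i * x i * (z j - x j) else 0) := by
          refine Finset.sum_congr rfl fun j _ => ?_
          rw [Finset.sum_mul]
          refine Finset.sum_congr rfl fun i _ => ?_
          split_ifs with h
          · ring
          · ring
        rw [h1, swap_tri fun j i => A j i * x i * (z j - x j), ← ssub2]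
        refine Finset.sum_congr rfl fun j _ => Finset.sum_congr rfl fun i _ => ?_
        split_ifs with h
        · rw [hsym i j]; ring
        · ring
      have hV : (∑ j : Fin n, (∑ i : Fin n, if (i:ℕ) < (j:ℕ) then A j i * z i else 0) * (z j - x j))
          = (∑ j : Fin n, ∑ i : Fin n, if (i:ℕ) < (j:ℕ) then A j i * (z i * z j) else 0)
            - (∑ j : Fin n, ∑ i : Fin n, if (i:ℕ) < (j:ℕ) then A j i * (z i * x j) else 0) := by
        have h1 : (∑ j : Fin n, (∑ i : Fin n, if (i:ℕ) < (j:ℕ) then A j i * z i else 0) * (z j - x j))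
            = ∑ j : Fin n, ∑ i : Fin n, (if (i:ℕ) < (j:ℕ) then A j i * z i * (z j - x j) else 0) := by
          refine Finset.sum_congr rfl fun j _ => ?_
          rw [Finset.sum_mul]
          refine Finset.sum_congr rfl fun i _ => ?_
          split_ifs with h
          · ring
          · ring
        rw [h1, ← ssub2]
        refine Finset.sum_congr rfl fun j _ => Finset.sum_congr rfl fun i _ => ?_
        split_ifs with h
        · ring
        · ring
      -- scalar diagonal identity
      have hSc : (∑ j : Fin n, ((1/2 : ℝ) * (ω⁻¹ * (A j j + θ)) * (z j ^ 2 - x j ^ 2)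
              + ω⁻¹ * ((ω - 1) * A j j - θ) * x j * (z j - x j)))
          = (∑ j : Fin n, ((1/2) * (A j j * (z j * z j)) - (1/2) * (A j j * (x j * x j))
              + (1/2) * ((θ / ω + (1 - ω) / ω * A j j) * (z j - x j) ^ 2))) := by
        refine Finset.sum_congr rfl fun j _ => ?_
        field_simp
        ring
      have hSc2 : (∑ j : Fin n, ((1/2 : ℝ) * (A j j * (z j * z j)) - (1/2) * (A j j * (x j * x j))
              + (1/2) * ((θ / ω + (1 - ω) / ω * A j j) * (z j - x j) ^ 2)))
          = (1/2) * (∑ j : Fin n, A j j * (z j * z j)) - (1/2) * (∑ j : Fin n, A j j * (x j * x j))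
            + (1/2) * ∑ j : Fin n, (θ / ω + (1 - ω) / ω * A j j) * (z j - x j) ^ 2 := by
        rw [Finset.sum_add_distrib, Finset.sum_sub_distrib, ← Finset.mul_sum, ← Finset.mul_sum,
          ← Finset.mul_sum]
      rw [hsplit, hU, hV, hquad z, hquad x, hSc, hSc2]
      ring
    rw [hid]
    linarith
  -- conclude from key
  have hsum_ge : δ * (∑ j : Fin n, (z j - x j)^2)
      ≤ ∑ j : Fin n, (θ / ω + (1 - ω) / ω * A j j) * (z j - x j)^2 := by
    rw [Finset.mul_sum]
    exact Finset.sum_le_sum fun j _ => mul_le_mul_of_nonneg_right (hδle j) (sq_nonneg _)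
  have h1 : f z - f x ≤ -(δ / 2) * ‖z - x‖ ^ 2 := by
    rw [hnorm]
    nlinarith [key, hsum_ge]
  refine ⟨h1, fun hδpos => ?_⟩
  have hn2 : 0 ≤ ‖z - x‖ ^ 2 := sq_nonneg _
  constructor
  · nlinarith [h1]
  · intro hne
    have hzx : z - x ≠ 0 := sub_ne_zero.mpr hne
    have hpos : 0 < ‖z - x‖ ^ 2 := by
      have := norm_pos_iff.mpr hzx
      positivity
    nlinarith [h1]
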